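/- In a finite Markov chain, almost every infinite trajectory eventually enters a bottom strongly connected component: for any infinite sequence of states q₀q₁q₂… generated with positive probability transitions, there exists an index i ≥ 0 such that q_i belongs to a BSCC (the set of trajectories that never enter a BSCC has probability zero). -/

import Mathlib

open MeasureTheory

/-- A set `B` of states is a bottom strongly connected component of the finite Markov
chain with transition matrix `T`: strongly connected (via positive-probability
transitions within `B`), maximal among strongly connected sets, and closed. -/
def IsBSCC {Q : Type*} [Fintype Q] (T : Q → Q → ℝ) (B : Finset Q) : Prop :=
  (∀ q ∈ B, ∀ t ∈ B,
    Relation.ReflTransGen (fun u v => u ∈ B ∧ v ∈ B ∧ 0 < T u v) q t) ∧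
  (∀ B' : Finset Q, B ⊆ B' →
    (∀ q ∈ B', ∀ t ∈ B',
      Relation.ReflTransGen (fun u v => u ∈ B' ∧ v ∈ B' ∧ 0 < T u v) q t) → B' = B) ∧
  (∀ s ∈ B, ∑ t ∈ B, T s t = 1)

section Aux

open Finset

variable {Q : Type*} [Fintype Q] [DecidableEq Q]

/-- probability of staying in `A` for `m` steps starting from `q`. -/
noncomputable def rfun (T : Q → Q → ℝ) (A : Finset Q) : ℕ → Q → ℝ
  | 0, q => if q ∈ A then 1 else 0
  | m+1, q => if q ∈ A then ∑ t, T q t * rfun T A m t else 0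

variable {T : Q → Q → ℝ} {A : Finset Q}

lemma rfun_nonneg (hT0 : ∀ q t, 0 ≤ T q t) : ∀ m (q : Q), 0 ≤ rfun T A m q := by
  intro m
  induction m with
  | zero => intro q; simp only [rfun]; split <;> norm_num
  | succ m ih =>
    intro q
    simp only [rfun]
    split
    · exact Finset.sum_nonneg fun t _ => mul_nonneg (hT0 q t) (ih t)
    · exact le_rfl

lemma rfun_le_one (hT0 : ∀ q t, 0 ≤ T q t) (hT1 : ∀ q, ∑ t, T q t = 1) :
    ∀ m (q : Q), rfun T A m q ≤ 1 := by
  intro m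
  induction m with
  | zero => intro q; simp only [rfun]; split <;> norm_num
  | succ m ih =>
    intro q
    simp only [rfun]
    split
    · calc ∑ t, T q t * rfun T A m t ≤ ∑ t, T q t * 1 :=
            Finset.sum_le_sum fun t _ => mul_le_mul_of_nonneg_left (ih t) (hT0 q t)
        _ = 1 := by simpa using hT1 q
    · norm_num

lemma rfun_eq_zero {q : Q} (h : q ∉ A) (m : ℕ) : rfun T A m q = 0 := by
  cases m <;> simp [rfun, h]

lemma rfun_succ_le (hT0 : ∀ q t, 0 ≤ T q t) (hT1 : ∀ q, ∑ t, T q t = 1) :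
    ∀ m (q : Q), rfun T A (m+1) q ≤ rfun T A m q := by
  intro m
  induction m with
  | zero =>
    intro q
    by_cases h : q ∈ A
    · simp only [rfun, if_pos h]
      calc ∑ t, T q t * rfun T A 0 t ≤ ∑ t, T q t * 1 :=
            Finset.sum_le_sum fun t _ => mul_le_mul_of_nonneg_left
              (rfun_le_one hT0 hT1 0 t) (hT0 q t)
        _ = 1 := by simpa using hT1 q
    · simp [rfun, h]
  | succ m ih =>
    intro q
    by_cases h : q ∈ A
    · simp only [rfun, if_pos h]
      exact Finset.sum_le_sum fun t _ => mul_le_mul_of_nonneg_left (ih t) (hT0 q t)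
    · simp [rfun, h]

lemma rfun_anti (hT0 : ∀ q t, 0 ≤ T q t) (hT1 : ∀ q, ∑ t, T q t = 1) {m n : ℕ}
    (h : m ≤ n) (q : Q) : rfun T A n q ≤ rfun T A m q := by
  induction n with
  | zero => simp_all
  | succ n ih =>
    rcases Nat.lt_succ_iff_lt_or_eq.mp (Nat.lt_succ_of_le h) with h' | h'
    · exact le_trans (rfun_succ_le hT0 hT1 n q) (ih (Nat.lt_succ_iff.mp h'))
    · exact le_of_eq (by rw [h'])

lemma rfun_lt_one (hT0 : ∀ q t, 0 ≤ T q t) (hT1 : ∀ q, ∑ t, T q t = 1) {q t : Q}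
    (h : Relation.ReflTransGen (fun u v => 0 < T u v) q t) (ht : t ∉ A) :
    ∃ L, rfun T A L q < 1 := by
  induction h using Relation.ReflTransGen.head_induction_on with
  | refl => exact ⟨0, by simp [rfun, ht]⟩
  | head h' hcb ih =>
    rename_i a b
    obtain ⟨L, hL⟩ := ih
    refine ⟨L + 1, ?_⟩
    by_cases ha : a ∈ A
    · simp only [rfun, if_pos ha]
      have key : ∑ u, T a u * rfun T A L u <
          T a b * 1 + ∑ u ∈ Finset.univ.erase b, T a u * 1 := by
        rw [← Finset.add_sum_erase Finset.univ (fun u => T a u * rfun T A L u)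
          (Finset.mem_univ b)]
        refine add_lt_add_of_lt_of_le ?_ ?_
        · exact mul_lt_mul_of_pos_left hL h'
        · exact Finset.sum_le_sum fun u _ => mul_le_mul_of_nonneg_left
            (rfun_le_one hT0 hT1 L u) (hT0 a u)
      have : T a b * 1 + ∑ u ∈ Finset.univ.erase b, T a u * 1 = 1 := by
        simp only [mul_one]
        rw [Finset.add_sum_erase Finset.univ (fun u => T a u) (Finset.mem_univ b)]
        exact hT1 a
      linarith
    · simpa [rfun, ha] using one_pos

lemma rfun_add_le (hT0 : ∀ q t, 0 ≤ T q t) {C : ℝ} {b : ℕ} (hC0 : 0 ≤ C)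
    (hC : ∀ t, rfun T A b t ≤ C) : ∀ a (q : Q), rfun T A (a + b) q ≤ C * rfun T A a q := by
  intro a
  induction a with
  | zero =>
    intro q
    by_cases h : q ∈ A
    · simpa [rfun, h] using hC q
    · simp [rfun_eq_zero h]
  | succ a ih =>
    intro q
    have : a + 1 + b = (a + b) + 1 := by omega
    rw [this]
    by_cases h : q ∈ A
    · simp only [rfun, if_pos h, Finset.mul_sum]
      refine Finset.sum_le_sum fun u _ => ?_
      calc T q u * rfun T A (a + b) u ≤ T q u * (C * rfun T A a u) :=
            mul_le_mul_of_nonneg_left (ih u) (hT0 q u)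
        _ = C * (T q u * rfun T A a u) := by ring
    · simp [rfun, h]

lemma rfun_pow (hT0 : ∀ q t, 0 ≤ T q t) (hT1 : ∀ q, ∑ t, T q t = 1) {C : ℝ} {N : ℕ}
    (hC0 : 0 ≤ C) (hC : ∀ t, rfun T A N t ≤ C) :
    ∀ k (q : Q), rfun T A (k * N) q ≤ C ^ k := by
  intro k
  induction k with
  | zero => intro q; simpa using rfun_le_one hT0 hT1 0 q
  | succ k ih =>
    intro q
    have : (k + 1) * N = k * N + N := by ring
    rw [this, pow_succ]
    calc rfun T A (k * N + N) q ≤ C * rfun T A (k * N) q := rfun_add_le hT0 hC0 hC _ q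
      _ ≤ C * C ^ k := mul_le_mul_of_nonneg_left (ih q) hC0
      _ = C ^ k * C := by ring

/-- Extend a finite word to an infinite one. -/
def extw {m : ℕ} (w : Fin (m+1) → Q) : ℕ → Q :=
  fun i => if h : i < m + 1 then w ⟨i, h⟩ else w 0

lemma extw_cons_zero {m : ℕ} (q : Q) (v : Fin (m+1) → Q) :
    extw (Fin.cons q v : Fin (m+2) → Q) 0 = q := by
  simp [extw]

lemma extw_cons_succ {m : ℕ} (q : Q) (v : Fin (m+1) → Q) (i : ℕ) (hi : i < m + 1) :
    extw (Fin.cons q v : Fin (m+2) → Q) (i + 1) = extw v i := by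
  have h1 : i + 1 < m + 2 := by omega
  simp only [extw, dif_pos h1, dif_pos hi]
  have : (⟨i + 1, h1⟩ : Fin (m+2)) = Fin.succ ⟨i, hi⟩ := rfl
  rw [this, Fin.cons_succ]

lemma rfun_eq_wordSum :
    ∀ m (t : Q), rfun T A m t =
      ∑ w : Fin (m+1) → Q, if (∀ i, w i ∈ A) ∧ w 0 = t then
        ∏ i ∈ Finset.range m, T (extw w i) (extw w (i+1)) else 0 := by
  intro m
  induction m with
  | zero =>
    intro t
    have he : (∑ w : Fin (0+1) → Q, if (∀ i, w i ∈ A) ∧ w 0 = t then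
          ∏ i ∈ Finset.range 0, T (extw w i) (extw w (i+1)) else 0)
        = ∑ q : Q, if q = t then (if q ∈ A then (1:ℝ) else 0) else 0 := by
      apply Fintype.sum_equiv (Equiv.funUnique (Fin 1) Q)
      intro w
      simp only [Finset.range_zero, Finset.prod_empty, Equiv.funUnique_apply]
      by_cases h1 : w 0 = t <;> by_cases h2 : w 0 ∈ A <;>
        simp [h1, h2, Unique.forall_iff]
    rw [he, Finset.sum_ite_eq' Finset.univ t (fun q => if q ∈ A then (1:ℝ) else 0),
      if_pos (Finset.mem_univ t)]
    simp [rfun]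
  | succ m ih =>
    intro t
    rw [← Equiv.sum_comp (Fin.consEquiv (fun _ => Q))
      (fun w : Fin (m+2) → Q => if (∀ i, w i ∈ A) ∧ w 0 = t then
        ∏ i ∈ Finset.range (m+1), T (extw w i) (extw w (i+1)) else 0)]
    rw [Fintype.sum_prod_type]
    have hconv : ∀ (q : Q) (v : Fin (m+1) → Q),
        (if (∀ i, (Fin.cons q v : Fin (m+2) → Q) i ∈ A) ∧
            (Fin.cons q v : Fin (m+2) → Q) 0 = t then
          ∏ i ∈ Finset.range (m+1), T (extw (Fin.cons q v : Fin (m+2) → Q) i)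
            (extw (Fin.cons q v : Fin (m+2) → Q) (i+1)) else 0) =
        if q = t then (if (q ∈ A ∧ ∀ i, v i ∈ A) then
          T q (v 0) * ∏ i ∈ Finset.range m, T (extw v i) (extw v (i+1)) else 0) else 0 := by
      intro q v
      have hprod : ∏ i ∈ Finset.range (m+1), T (extw (Fin.cons q v : Fin (m+2) → Q) i)
          (extw (Fin.cons q v : Fin (m+2) → Q) (i+1)) =
          T q (v 0) * ∏ i ∈ Finset.range m, T (extw v i) (extw v (i+1)) := by
        rw [Finset.prod_range_succ']
        rw [mul_comm]
        congr 1
        · refine Finset.prod_congr rfl fun i hi => ?_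
          have hi' : i < m := Finset.mem_range.mp hi
          rw [extw_cons_succ q v i (by omega), extw_cons_succ q v (i+1) (by omega)]
      have hmem : (∀ i, (Fin.cons q v : Fin (m+2) → Q) i ∈ A) ↔
          (q ∈ A ∧ ∀ i, v i ∈ A) := by
        rw [Fin.forall_fin_succ]
        simp [Fin.cons_succ]
      by_cases hqt : q = t
      · subst hqt
        rw [if_pos rfl]
        by_cases hA' : q ∈ A ∧ ∀ i, v i ∈ A
        · rw [if_pos hA', if_pos ⟨hmem.mpr hA', by simp⟩, hprod]
        · rw [if_neg hA', if_neg (fun hc => hA' (hmem.mp hc.1))]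
      · rw [if_neg hqt, if_neg (fun hc => hqt (by simpa using hc.2))]
    have hstep1 : ∀ q : Q, (∑ v : Fin (m+1) → Q, if q = t then
          (if (q ∈ A ∧ ∀ i, v i ∈ A) then
            T q (v 0) * ∏ i ∈ Finset.range m, T (extw v i) (extw v (i+1)) else 0) else 0)
        = if q = t then (∑ v : Fin (m+1) → Q, if (q ∈ A ∧ ∀ i, v i ∈ A) then
            T q (v 0) * ∏ i ∈ Finset.range m, T (extw v i) (extw v (i+1)) else 0) else 0 := by
      intro q; by_cases h : q = t <;> simp [h]
    have key : ∀ q : Q, (∑ v : Fin (m+1) → Q,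
        (if (∀ i, (Fin.cons q v : Fin (m+2) → Q) i ∈ A) ∧
            (Fin.cons q v : Fin (m+2) → Q) 0 = t then
          ∏ i ∈ Finset.range (m+1), T (extw (Fin.cons q v : Fin (m+2) → Q) i)
            (extw (Fin.cons q v : Fin (m+2) → Q) (i+1)) else 0))
        = if q = t then (∑ v : Fin (m+1) → Q, if (q ∈ A ∧ ∀ i, v i ∈ A) then
            T q (v 0) * ∏ i ∈ Finset.range m, T (extw v i) (extw v (i+1)) else 0) else 0 := by
      intro q
      rw [← hstep1 q]
      exact Finset.sum_congr rfl fun v _ => hconv q v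
    refine Eq.trans ?_ (Finset.sum_congr rfl fun q _ => (key q).symm)
    rw [Finset.sum_ite_eq' Finset.univ t, if_pos (Finset.mem_univ t)]
    by_cases ht : t ∈ A
    · simp only [rfun, if_pos ht, ht, true_and]
      calc ∑ u, T t u * rfun T A m u
          = ∑ u, ∑ v : Fin (m+1) → Q, if (∀ i, v i ∈ A) ∧ v 0 = u then
              T t u * ∏ i ∈ Finset.range m, T (extw v i) (extw v (i+1)) else 0 := by
            refine Finset.sum_congr rfl fun u _ => ?_
            rw [ih u, Finset.mul_sum]
            exact Finset.sum_congr rfl fun v _ => by rw [mul_ite, mul_zero]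
        _ = ∑ v : Fin (m+1) → Q, ∑ u, if (∀ i, v i ∈ A) ∧ v 0 = u then
              T t u * ∏ i ∈ Finset.range m, T (extw v i) (extw v (i+1)) else 0 :=
            Finset.sum_comm
        _ = ∑ v : Fin (m+1) → Q, if (∀ i, v i ∈ A) then
              T t (v 0) * ∏ i ∈ Finset.range m, T (extw v i) (extw v (i+1)) else 0 := by
            refine Finset.sum_congr rfl fun v _ => ?_
            by_cases hv : ∀ i, v i ∈ A
            · have hc : ∀ u : Q, (((∀ i, v i ∈ A) ∧ v 0 = u) : Prop) = (v 0 = u) :=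
                fun u => by simp [hv]
              simp only [hc]
              rw [Finset.sum_ite_eq Finset.univ (v 0)
                (fun u => T t u * ∏ i ∈ Finset.range m, T (extw v i) (extw v (i+1)))]
              rw [if_pos (Finset.mem_univ (v 0)), if_pos hv]
            · simp [hv]
    · simp only [rfun, if_neg ht]
      symm
      refine Finset.sum_eq_zero fun v _ => ?_
      simp [ht]

lemma sum_rfun_eq_wordSum (m : ℕ) :
    ∑ q, rfun T A m q =
      ∑ w ∈ Finset.univ.filter (fun w : Fin (m+1) → Q => ∀ i, w i ∈ A),
        ∏ i ∈ Finset.range m, T (extw w i) (extw w (i+1)) := by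
  rw [Finset.sum_congr rfl fun t (_ : t ∈ Finset.univ) => rfun_eq_wordSum m t,
    Finset.sum_comm, Finset.sum_filter]
  refine Finset.sum_congr rfl fun w _ => ?_
  by_cases hP : ∀ i, w i ∈ A
  · have hc : ∀ x : Q, (((∀ i, w i ∈ A) ∧ w 0 = x) : Prop) = (w 0 = x) := fun x => by
      simp [hP]
    simp only [hc]
    rw [Finset.sum_ite_eq Finset.univ (w 0)
      (fun _ => ∏ i ∈ Finset.range m, T (extw w i) (extw w (i+1)))]
    simp [hP]
  · simp [hP]

lemma exists_reach_max (T : Q → Q → ℝ) (q : Q) :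
    ∃ t, Relation.ReflTransGen (fun u v => 0 < T u v) q t ∧
      ∀ s, Relation.ReflTransGen (fun u v => 0 < T u v) t s →
        Relation.ReflTransGen (fun u v => 0 < T u v) s t := by
  classical
  have main : ∀ n (q : Q), (Finset.univ.filter
      (fun s => Relation.ReflTransGen (fun u v => 0 < T u v) q s)).card ≤ n →
      ∃ t, Relation.ReflTransGen (fun u v => 0 < T u v) q t ∧
        ∀ s, Relation.ReflTransGen (fun u v => 0 < T u v) t s →
          Relation.ReflTransGen (fun u v => 0 < T u v) s t := by
    intro n
    induction n with
    | zero =>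
      intro q hq
      exfalso
      have : q ∈ Finset.univ.filter
          (fun s => Relation.ReflTransGen (fun u v => 0 < T u v) q s) :=
        Finset.mem_filter.mpr ⟨Finset.mem_univ q, Relation.ReflTransGen.refl⟩
      have := Finset.card_pos.mpr ⟨q, this⟩
      omega
    | succ n ih =>
      intro q hq
      by_cases hgood : ∀ s, Relation.ReflTransGen (fun u v => 0 < T u v) q s →
          Relation.ReflTransGen (fun u v => 0 < T u v) s q
      · exact ⟨q, Relation.ReflTransGen.refl, hgood⟩
      · push_neg at hgood
        obtain ⟨s, hqs, hns⟩ := hgood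
        have hsub : Finset.univ.filter
            (fun x => Relation.ReflTransGen (fun u v => 0 < T u v) s x) ⊆
            Finset.univ.filter
            (fun x => Relation.ReflTransGen (fun u v => 0 < T u v) q x) := by
          intro x hx
          exact Finset.mem_filter.mpr ⟨Finset.mem_univ x,
            hqs.trans (Finset.mem_filter.mp hx).2⟩
        have hqn : q ∉ Finset.univ.filter
            (fun x => Relation.ReflTransGen (fun u v => 0 < T u v) s x) := by
          simp only [Finset.mem_filter, Finset.mem_univ, true_and]
          exact hns
        have hqm : q ∈ Finset.univ.filter
            (fun x => Relation.ReflTransGen (fun u v => 0 < T u v) q x) :=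
          Finset.mem_filter.mpr ⟨Finset.mem_univ q, Relation.ReflTransGen.refl⟩
        have hcard := Finset.card_lt_card ⟨hsub, fun hsub' => hqn (hsub' hqm)⟩
        obtain ⟨t, hst, hmax⟩ := ih s (by omega)
        exact ⟨t, hqs.trans hst, hmax⟩
  exact main (Finset.univ.filter _).card q le_rfl

lemma exists_bscc_reach (hT0 : ∀ q t, 0 ≤ T q t) (hT1 : ∀ q, ∑ t, T q t = 1) (q : Q) :
    ∃ t : Q, ∃ B : Finset Q, IsBSCC T B ∧ t ∈ B ∧
      Relation.ReflTransGen (fun u v => 0 < T u v) q t := by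
  classical
  obtain ⟨t, hqt, hmax⟩ := exists_reach_max T q
  set R : Q → Q → Prop := fun u v => 0 < T u v with hR
  set B : Finset Q := Finset.univ.filter (fun x => Relation.ReflTransGen R t x) with hB
  have hmemB : ∀ x, x ∈ B ↔ Relation.ReflTransGen R t x := by
    intro x
    simp [hB]
  have hclosed : ∀ a b, a ∈ B → R a b → b ∈ B := fun a b ha hab =>
    (hmemB b).mpr (((hmemB a).mp ha).tail hab)
  have hrestr : ∀ a b, Relation.ReflTransGen R a b → a ∈ B →
      Relation.ReflTransGen (fun u v => u ∈ B ∧ v ∈ B ∧ 0 < T u v) a b := by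
    intro a b hab ha
    induction hab with
    | refl => exact Relation.ReflTransGen.refl
    | tail h1 h2 ih =>
      rename_i c d
      have hc : c ∈ B := (hmemB c).mpr (((hmemB a).mp ha).trans h1)
      exact ih.tail ⟨hc, hclosed c d hc h2, h2⟩
  have htB : t ∈ B := (hmemB t).mpr Relation.ReflTransGen.refl
  refine ⟨t, B, ⟨?_, ?_, ?_⟩, htB, hqt⟩
  · intro a ha b hb
    have h1 : Relation.ReflTransGen R a t := hmax a ((hmemB a).mp ha)
    exact hrestr a b (h1.trans ((hmemB b).mp hb)) ha
  · intro B' hBB' hconn'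
    refine Finset.Subset.antisymm ?_ hBB'
    intro x hx
    have h1 := hconn' t (hBB' htB) x hx
    exact (hmemB x).mpr (Relation.ReflTransGen.mono (p := R) (fun u v (h : u ∈ B' ∧ v ∈ B' ∧ 0 < T u v) => h.2.2) t x h1)
  · intro s hs
    rw [Finset.sum_subset (Finset.subset_univ B) ?_]
    · exact hT1 s
    · intro u _ hu
      by_contra hne
      exact hu (hclosed s u hs (lt_of_le_of_ne (hT0 s u) (Ne.symm hne)))

end Aux

section Measure

open Finset

lemma cyl_bound {Q : Type*} [Fintype Q] [MeasurableSpace Q]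
    (T : Q → Q → ℝ) (hT0 : ∀ q t, 0 ≤ T q t)
    (μ : MeasureTheory.Measure (ℕ → Q)) [MeasureTheory.IsProbabilityMeasure μ]
    (hMarkov : ∀ (m : ℕ) (w : ℕ → Q),
      μ {ω | ∀ i ≤ m + 1, ω i = w i} =
        μ {ω | ∀ i ≤ m, ω i = w i} * ENNReal.ofReal (T (w m) (w (m + 1)))) :
    ∀ m (v : ℕ → Q), μ {ω | ∀ i ≤ m, ω i = v i} ≤
      ENNReal.ofReal (∏ i ∈ Finset.range m, T (v i) (v (i+1))) := by
  intro m
  induction m with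
  | zero =>
    intro v
    simpa using MeasureTheory.prob_le_one
  | succ m ih =>
    intro v
    rw [hMarkov m v, Finset.prod_range_succ,
      ENNReal.ofReal_mul (Finset.prod_nonneg fun i _ => hT0 _ _)]
    exact mul_le_mul_left (ih v) _

end Measure

theorem stmt_13 {Q : Type*} [Fintype Q] [MeasurableSpace Q] [MeasurableSingletonClass Q]
    (T : Q → Q → ℝ)
    (hT0 : ∀ q t, 0 ≤ T q t) (hT1 : ∀ q, ∑ t, T q t = 1)
    (μ : Measure (ℕ → Q)) [IsProbabilityMeasure μ]
    (hMarkov : ∀ (m : ℕ) (w : ℕ → Q),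
      μ {ω | ∀ i ≤ m + 1, ω i = w i} =
        μ {ω | ∀ i ≤ m, ω i = w i} * ENNReal.ofReal (T (w m) (w (m + 1)))) :
    μ {ω | ∀ i : ℕ, ∀ B : Finset Q, IsBSCC T B → ω i ∉ B} = 0 := by
  classical
  by_cases hQ : Nonempty Q
  swap
  · have : IsEmpty (ℕ → Q) := ⟨fun f => (not_nonempty_iff.mp hQ).false (f 0)⟩
    simp [Set.eq_empty_of_isEmpty]
  obtain ⟨q0⟩ := hQ
  set A : Finset Q := Finset.univ.filter
    (fun q => ∀ B : Finset Q, IsBSCC T B → q ∉ B) with hA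
  have hmemA : ∀ x, x ∈ A ↔ ∀ B : Finset Q, IsBSCC T B → x ∉ B := by
    intro x; simp [hA]
  have hLq : ∀ q : Q, ∃ L, rfun T A L q < 1 := by
    intro q
    obtain ⟨t, B, hB, htB, hqt⟩ := exists_bscc_reach hT0 hT1 q
    exact rfun_lt_one hT0 hT1 hqt (fun htA => (hmemA t).mp htA B hB htB)
  choose L hL using hLq
  set N := Finset.univ.sup L with hNdef
  have hN : ∀ q, rfun T A N q < 1 := fun q =>
    lt_of_le_of_lt (rfun_anti hT0 hT1 (Finset.le_sup (Finset.mem_univ q)) q) (hL q)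
  have hune : (Finset.univ : Finset Q).Nonempty := ⟨q0, Finset.mem_univ q0⟩
  set C := Finset.univ.sup' hune (rfun T A N) with hCdef
  have hC1 : C < 1 := (Finset.sup'_lt_iff hune).mpr fun q _ => hN q
  have hCge : ∀ t, rfun T A N t ≤ C := fun t => Finset.le_sup' _ (Finset.mem_univ t)
  have hC0 : 0 ≤ C := le_trans (rfun_nonneg hT0 N q0) (hCge q0)
  have hbound : ∀ m : ℕ,
      μ {ω | ∀ i : ℕ, ∀ B : Finset Q, IsBSCC T B → ω i ∉ B} ≤
        ENNReal.ofReal (∑ q, rfun T A m q) := by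
    intro m
    have hZsub : {ω : ℕ → Q | ∀ i : ℕ, ∀ B : Finset Q, IsBSCC T B → ω i ∉ B} ⊆
        ⋃ w ∈ Finset.univ.filter (fun w : Fin (m+1) → Q => ∀ i, w i ∈ A),
          {ω : ℕ → Q | ∀ i ≤ m, ω i = extw w i} := by
      intro ω hω
      refine Set.mem_iUnion₂.mpr ⟨fun i : Fin (m+1) => ω i.val, ?_, ?_⟩
      · refine Finset.mem_filter.mpr ⟨Finset.mem_univ _, fun i => ?_⟩
        exact (hmemA (ω i.val)).mpr (hω i.val)
      · intro i hi
        have hi' : i < m + 1 := Nat.lt_succ_of_le hi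
        simp [extw, hi']
    calc μ {ω | ∀ i : ℕ, ∀ B : Finset Q, IsBSCC T B → ω i ∉ B}
        ≤ μ (⋃ w ∈ Finset.univ.filter (fun w : Fin (m+1) → Q => ∀ i, w i ∈ A),
            {ω : ℕ → Q | ∀ i ≤ m, ω i = extw w i}) := measure_mono hZsub
      _ ≤ ∑ w ∈ Finset.univ.filter (fun w : Fin (m+1) → Q => ∀ i, w i ∈ A),
            μ {ω : ℕ → Q | ∀ i ≤ m, ω i = extw w i} :=
          measure_biUnion_finset_le _ _
      _ ≤ ∑ w ∈ Finset.univ.filter (fun w : Fin (m+1) → Q => ∀ i, w i ∈ A),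
            ENNReal.ofReal (∏ i ∈ Finset.range m, T (extw w i) (extw w (i+1))) :=
          Finset.sum_le_sum fun w _ => cyl_bound T hT0 μ hMarkov m (extw w)
      _ = ENNReal.ofReal (∑ w ∈ Finset.univ.filter
            (fun w : Fin (m+1) → Q => ∀ i, w i ∈ A),
            ∏ i ∈ Finset.range m, T (extw w i) (extw w (i+1))) :=
          (ENNReal.ofReal_sum_of_nonneg fun w _ =>
            Finset.prod_nonneg fun i _ => hT0 _ _).symm
      _ = ENNReal.ofReal (∑ q, rfun T A m q) := by rw [sum_rfun_eq_wordSum]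
  have hfin : ∀ k : ℕ,
      μ {ω | ∀ i : ℕ, ∀ B : Finset Q, IsBSCC T B → ω i ∉ B} ≤
        ENNReal.ofReal ((Fintype.card Q : ℝ) * C ^ k) := by
    intro k
    refine le_trans (hbound (k * N)) (ENNReal.ofReal_le_ofReal ?_)
    calc ∑ q, rfun T A (k * N) q ≤ ∑ _q : Q, C ^ k :=
          Finset.sum_le_sum fun q _ => rfun_pow hT0 hT1 hC0 hCge k q
      _ = (Fintype.card Q : ℝ) * C ^ k := by
          simp [Finset.sum_const, Finset.card_univ, nsmul_eq_mul]
  have htend : Filter.Tendsto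
      (fun k => ENNReal.ofReal ((Fintype.card Q : ℝ) * C ^ k))
      Filter.atTop (nhds 0) := by
    have h1 : Filter.Tendsto (fun k : ℕ => (Fintype.card Q : ℝ) * C ^ k)
        Filter.atTop (nhds ((Fintype.card Q : ℝ) * 0)) :=
      (tendsto_pow_atTop_nhds_zero_of_abs_lt_one
        (by rw [abs_of_nonneg hC0]; exact hC1)).const_mul _
    rw [mul_zero] at h1
    have := ENNReal.tendsto_ofReal h1
    simpa using this
  have hle : μ {ω | ∀ i : ℕ, ∀ B : Finset Q, IsBSCC T B → ω i ∉ B} ≤ 0 :=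
    ge_of_tendsto' htend hfin
  exact le_antisymm hle zero_le
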